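/- For any permutation q of length n−1 (with n ≥ 2), the number of permutations of length n that contain q as a pattern is exactly n² − 2n + 2 = (n−1)² + 1. -/

import Mathlib

open Finset

/-- `del p i`: delete the `i`-th entry of `p` and relabel order-isomorphically. -/
def del {n : ℕ} (p : Equiv.Perm (Fin (n + 1))) (i : Fin (n + 1)) : Equiv.Perm (Fin n) :=
  (Tuple.sort fun j => p (i.succAbove j))⁻¹

/-- `D1 p`: the set of `(n-1)`-patterns of `p`. -/
def D1 {n : ℕ} (p : Equiv.Perm (Fin (n + 1))) : Finset (Equiv.Perm (Fin n)) :=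
  Finset.univ.image (del p)

/-- `ins q j k`: insert the value `k - 1/2` just left of position `j` and relabel. -/
def ins {n : ℕ} (q : Equiv.Perm (Fin n)) (j k : Fin (n + 1)) : Equiv.Perm (Fin (n + 1)) :=
  (finSuccEquiv' j).trans ((Equiv.optionCongr q).trans (finSuccEquiv' k).symm)

/-- `C p`: the number of bonds of `p` (adjacent positions with values differing by 1). -/
def C {n : ℕ} (p : Equiv.Perm (Fin (n + 1))) : ℕ :=
  (Finset.univ.filter fun i : Fin n =>
    Nat.dist (p i.castSucc).val (p i.succ).val = 1).card

/-- minimum gap of an injective word `f`, via the taxicab metric on (index, value). -/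
noncomputable def mgF {n : ℕ} (f : Fin n → ℕ) : ℕ :=
  sInf {m : ℕ | ∃ i j : Fin n, i < j ∧ Nat.dist i.val j.val + Nat.dist (f i) (f j) = m}

/-- minimum gap of a permutation. -/
noncomputable def mg {n : ℕ} (p : Equiv.Perm (Fin n)) : ℕ := mgF fun i => (p i).val

/-- the span of entries `p i` and `p j`: indices of entries strictly between them
horizontally or vertically. -/
def span {n : ℕ} (p : Equiv.Perm (Fin n)) (i j : Fin n) : Finset (Fin n) :=
  Finset.univ.filter fun m =>
    (i < m ∧ m < j) ∨ (min (p i) (p j) < p m ∧ p m < max (p i) (p j))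

/-- the pattern of `p` after deleting the entries at positions in `S`, encoded as the
list of (0-based) ranks of the remaining entries in positional order. -/
def patList {n : ℕ} (p : Equiv.Perm (Fin n)) (S : Finset (Fin n)) : List ℕ :=
  let l := (Sᶜ.sort (· ≤ ·)).map fun t => (p t).val
  l.map fun v => (l.filter fun w => w < v).length

/-- `Dk p k`: the set of distinct `(n-k)`-patterns of `p`. -/
def Dk {n : ℕ} (p : Equiv.Perm (Fin n)) (k : ℕ) : Finset (List ℕ) :=
  (Finset.univ.filter fun S : Finset (Fin n) => S.card = k).image (patList p)

lemma ins_apply_self {n : ℕ} (q : Equiv.Perm (Fin n)) (j k : Fin (n + 1)) :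
    ins q j k j = k := by
  simp [ins]

lemma ins_apply_succAbove {n : ℕ} (q : Equiv.Perm (Fin n)) (j k : Fin (n + 1)) (m : Fin n) :
    ins q j k (j.succAbove m) = k.succAbove (q m) := by
  simp [ins]

lemma del_ins {n : ℕ} (q : Equiv.Perm (Fin n)) (j k : Fin (n + 1)) :
    del (ins q j k) j = q := by
  have hs : (q⁻¹ : Equiv.Perm (Fin n)) = Tuple.sort (fun m => ins q j k (j.succAbove m)) := by
    rw [Tuple.eq_sort_iff]
    constructor
    · intro a b hab
      simp only [Function.comp, ins_apply_succAbove, Equiv.Perm.inv_def, Equiv.apply_symm_apply]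
      exact (Fin.strictMono_succAbove k).monotone hab
    · intro a b hab heq
      simp only [ins_apply_succAbove, Equiv.Perm.inv_def, Equiv.apply_symm_apply] at heq
      exact absurd ((Fin.strictMono_succAbove k).injective heq) hab.ne
  rw [del, ← hs, inv_inv]

lemma eq_ins_of_del {n : ℕ} (q : Equiv.Perm (Fin n)) (p : Equiv.Perm (Fin (n + 1)))
    (i : Fin (n + 1)) (h : del p i = q) : p = ins q i (p i) := by
  have hsort : Tuple.sort (fun m => p (i.succAbove m)) = q⁻¹ := by
    rw [← h, del, inv_inv]
  have hmono : Monotone ((fun m => p (i.succAbove m)) ∘ ⇑(q⁻¹ : Equiv.Perm (Fin n))) := by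
    have := Tuple.monotone_sort (fun m => p (i.succAbove m))
    rwa [hsort] at this
  have hinj : Function.Injective ((fun m => p (i.succAbove m)) ∘ ⇑(q⁻¹ : Equiv.Perm (Fin n))) := by
    intro a b hab
    simp only [Function.comp] at hab
    exact (q⁻¹ : Equiv.Perm (Fin n)).injective
      (Fin.succAbove_right_injective (p.injective hab))
  have hsm : StrictMono ((fun m => p (i.succAbove m)) ∘ ⇑(q⁻¹ : Equiv.Perm (Fin n))) :=
    hmono.strictMono_of_injective hinj
  set s : Finset (Fin (n + 1)) := {p i}ᶜ with hsdef
  have hcard : s.card = n := by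
    rw [hsdef, Finset.card_compl, Finset.card_singleton, Fintype.card_fin]; omega
  have h1 : ∀ x, ((fun m => p (i.succAbove m)) ∘ ⇑(q⁻¹ : Equiv.Perm (Fin n))) x ∈ s := by
    intro x
    simp only [hsdef, Function.comp, Finset.mem_compl, Finset.mem_singleton]
    exact fun hc => Fin.succAbove_ne i _ (p.injective hc)
  have h2 : ∀ x, (p i).succAbove x ∈ s := by
    intro x
    simp only [hsdef, Finset.mem_compl, Finset.mem_singleton]
    exact Fin.succAbove_ne (p i) x
  have e1 := Finset.orderEmbOfFin_unique hcard h1 hsm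
  have e2 := Finset.orderEmbOfFin_unique hcard h2 (Fin.strictMono_succAbove (p i))
  have key : ∀ m, p (i.succAbove m) = (p i).succAbove (q m) := by
    intro m
    have := congrFun (e1.trans e2.symm) (q m)
    simpa using this
  ext t
  rcases eq_or_ne t i with rfl | ht
  · rw [ins_apply_self]
  · obtain ⟨m, rfl⟩ := Fin.exists_succAbove_eq ht
    rw [ins_apply_succAbove, key]

lemma succAbove_pair {n : ℕ} (a b : Fin n) (h : a ≠ b) :
    b.castSucc.succAbove a = b.succ.succAbove a := by
  rcases lt_or_gt_of_ne h with hlt | hgt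
  · have h1 : a.castSucc < b.castSucc := Fin.castSucc_lt_castSucc_iff.2 hlt
    rw [Fin.succAbove_of_castSucc_lt _ _ h1,
      Fin.succAbove_of_castSucc_lt _ _ (h1.trans Fin.castSucc_lt_succ)]
  · rw [Fin.succAbove_of_le_castSucc _ _ (Fin.castSucc_le_castSucc_iff.2 hgt.le),
      Fin.succAbove_of_le_castSucc _ _ (Fin.succ_le_castSucc_iff.2 hgt)]

lemma succAbove_cases_val {n : ℕ} (k : Fin (n + 1)) (a : Fin n) :
    k.succAbove a = a.castSucc ∨ k.succAbove a = a.succ := by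
  rcases lt_or_ge a.castSucc k with h | h
  · exact Or.inl (Fin.succAbove_of_castSucc_lt _ _ h)
  · exact Or.inr (Fin.succAbove_of_le_castSucc _ _ h)

lemma ins_swap_asc {n : ℕ} (q : Equiv.Perm (Fin n)) (m : Fin n) :
    ins q m.castSucc (q m).castSucc = ins q m.succ (q m).succ := by
  apply Equiv.ext
  intro t
  rcases eq_or_ne t m.castSucc with rfl | h1
  · have hR : ins q m.succ (q m).succ m.castSucc = (q m).castSucc := by
      have := ins_apply_succAbove q m.succ (q m).succ m
      rwa [Fin.succAbove_succ_self, Fin.succAbove_succ_self] at this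
    rw [ins_apply_self, hR]
  rcases eq_or_ne t m.succ with rfl | h2
  · have hL : ins q m.castSucc (q m).castSucc m.succ = (q m).succ := by
      have := ins_apply_succAbove q m.castSucc (q m).castSucc m
      rwa [Fin.succAbove_castSucc_self, Fin.succAbove_castSucc_self] at this
    rw [hL, ins_apply_self]
  · obtain ⟨s, rfl⟩ := Fin.exists_succAbove_eq h1
    have hs : s ≠ m := by
      intro hsm; subst hsm; exact h2 (Fin.succAbove_castSucc_self s)
    rw [ins_apply_succAbove, succAbove_pair s m hs, ins_apply_succAbove]
    exact succAbove_pair (q s) (q m) (fun hc => hs (q.injective hc))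

lemma ins_swap_desc {n : ℕ} (q : Equiv.Perm (Fin n)) (m : Fin n) :
    ins q m.castSucc (q m).succ = ins q m.succ (q m).castSucc := by
  apply Equiv.ext
  intro t
  rcases eq_or_ne t m.castSucc with rfl | h1
  · have hR : ins q m.succ (q m).castSucc m.castSucc = (q m).succ := by
      have := ins_apply_succAbove q m.succ (q m).castSucc m
      rwa [Fin.succAbove_succ_self, Fin.succAbove_castSucc_self] at this
    rw [ins_apply_self, hR]
  rcases eq_or_ne t m.succ with rfl | h2
  · have hL : ins q m.castSucc (q m).succ m.succ = (q m).castSucc := by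
      have := ins_apply_succAbove q m.castSucc (q m).succ m
      rwa [Fin.succAbove_castSucc_self, Fin.succAbove_succ_self] at this
    rw [hL, ins_apply_self]
  · obtain ⟨s, rfl⟩ := Fin.exists_succAbove_eq h1
    have hs : s ≠ m := by
      intro hsm; subst hsm; exact h2 (Fin.succAbove_castSucc_self s)
    rw [ins_apply_succAbove, succAbove_pair s m hs, ins_apply_succAbove]
    exact (succAbove_pair (q s) (q m) (fun hc => hs (q.injective hc))).symm

lemma ins_inj_lt {n : ℕ} (q : Equiv.Perm (Fin n)) {j k j' k' : Fin (n + 1)}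
    (hlt : j < j') (heq : ins q j k = ins q j' k') :
    ∃ h : j' ≠ 0, k' = (q (j'.pred h)).castSucc ∨ k' = (q (j'.pred h)).succ := by
  have h0 : j' ≠ 0 := by
    intro hc; subst hc; exact absurd hlt (Fin.not_lt_zero j).elim
  refine ⟨h0, ?_⟩
  set m := j'.pred h0 with hm
  have hms : m.succ = j' := Fin.succ_pred _ _
  have hjm : j ≤ m.castSucc := by
    have h1 : j.val < j'.val := hlt
    have h2 : j'.val = m.val + 1 := by rw [← hms]; rfl
    exact Fin.le_def.2 (by simp [Fin.castSucc]; omega)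
  have h1 : j.succAbove m = j' := by rw [Fin.succAbove_of_le_castSucc _ _ hjm, hms]
  have hkey : k' = k.succAbove (q m) := by
    have h2 : ins q j k j' = k.succAbove (q m) := by rw [← h1, ins_apply_succAbove]
    have h3 : ins q j' k' j' = k' := ins_apply_self q j' k'
    rw [← h3, ← heq, h2]
  rcases succAbove_cases_val k (q m) with hc | hc
  · exact Or.inl (hkey.trans hc)
  · exact Or.inr (hkey.trans hc)

lemma ins_reduce {n : ℕ} (q : Equiv.Perm (Fin n)) :
    ∀ (N : ℕ) (j k : Fin (n + 1)), j.val ≤ N →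
      ∃ j' k' : Fin (n + 1),
        (∀ h : j' ≠ 0, k' ≠ (q (j'.pred h)).castSucc ∧ k' ≠ (q (j'.pred h)).succ) ∧
        ins q j' k' = ins q j k := by
  intro N
  induction N with
  | zero =>
    intro j k hj
    refine ⟨j, k, ?_, rfl⟩
    intro h
    exact absurd (Fin.ext (Nat.le_zero.mp hj)) h
  | succ N ih =>
    intro j k hj
    by_cases h0 : j = 0
    · exact ⟨j, k, fun h => absurd h0 h, rfl⟩
    · set m := j.pred h0 with hm
      have hms : m.succ = j := Fin.succ_pred _ _
      have hmv : (m.castSucc : Fin (n + 1)).val ≤ N := by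
        have h2 : j.val = m.val + 1 := by rw [← hms]; rfl
        have : (m.castSucc : Fin (n + 1)).val = m.val := rfl
        omega
      by_cases hk1 : k = (q m).castSucc
      · obtain ⟨j', k', hcan, heq⟩ := ih m.castSucc ((q m).succ) hmv
        refine ⟨j', k', hcan, heq.trans ?_⟩
        rw [ins_swap_desc, hms, ← hk1]
      · by_cases hk2 : k = (q m).succ
        · obtain ⟨j', k', hcan, heq⟩ := ih m.castSucc ((q m).castSucc) hmv
          refine ⟨j', k', hcan, heq.trans ?_⟩
          rw [ins_swap_asc, hms, ← hk2]
        · exact ⟨j, k, fun h => ⟨hk1, hk2⟩, rfl⟩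

theorem stmt3 {n : ℕ} (hn : 1 ≤ n) (q : Equiv.Perm (Fin n)) :
    (Finset.univ.filter fun p : Equiv.Perm (Fin (n + 1)) => ∃ i, del p i = q).card
      = n ^ 2 + 1 := by
  classical
  set T : Finset (Fin (n + 1) × Fin (n + 1)) :=
    Finset.univ.filter (fun jk => ∀ h : jk.1 ≠ 0,
      jk.2 ≠ (q (jk.1.pred h)).castSucc ∧ jk.2 ≠ (q (jk.1.pred h)).succ) with hT
  -- the filtered set is the image of T under insertion
  have hset : (Finset.univ.filter fun p : Equiv.Perm (Fin (n + 1)) => ∃ i, del p i = q)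
      = T.image (fun jk => ins q jk.1 jk.2) := by
    ext p
    simp only [Finset.mem_filter, Finset.mem_image, Finset.mem_univ, true_and, hT]
    constructor
    · rintro ⟨i, hdel⟩
      obtain ⟨j', k', hcan, heq⟩ := ins_reduce q i.val i (p i) le_rfl
      exact ⟨(j', k'), hcan, heq.trans (eq_ins_of_del q p i hdel).symm⟩
    · rintro ⟨⟨j, k⟩, _, rfl⟩
      exact ⟨j, del_ins q j k⟩
  rw [hset]
  -- injectivity on T
  have hinj : Set.InjOn (fun jk : Fin (n + 1) × Fin (n + 1) => ins q jk.1 jk.2) T := by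
    rintro ⟨j, k⟩ hjk ⟨j', k'⟩ hjk' heq
    simp only [hT, Finset.mem_coe, Finset.mem_filter, Finset.mem_univ, true_and] at hjk hjk'
    simp only at heq
    rcases lt_trichotomy j j' with hlt | heqj | hgt
    · obtain ⟨h0, hc⟩ := ins_inj_lt q hlt heq
      rcases hc with hc | hc
      · exact absurd hc (hjk' h0).1
      · exact absurd hc (hjk' h0).2
    · subst heqj
      have : k = k' := by
        have h1 := ins_apply_self q j k
        have h2 := ins_apply_self q j k'
        rw [← h1, ← h2, heq]
      rw [this]
    · obtain ⟨h0, hc⟩ := ins_inj_lt q hgt heq.symm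
      rcases hc with hc | hc
      · exact absurd hc (hjk h0).1
      · exact absurd hc (hjk h0).2
  rw [Finset.card_image_of_injOn hinj]
  -- count T
  have hsplit := Finset.card_filter_add_card_filter_not
    (s := (Finset.univ : Finset (Fin (n + 1) × Fin (n + 1))))
    (p := fun jk => ∀ h : jk.1 ≠ 0,
      jk.2 ≠ (q (jk.1.pred h)).castSucc ∧ jk.2 ≠ (q (jk.1.pred h)).succ)
  have huniv : (Finset.univ : Finset (Fin (n + 1) × Fin (n + 1))).card = (n + 1) * (n + 1) := by
    simp [Fintype.card_prod]
  -- the complement has 2n elements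
  have hB : (Finset.univ.filter (fun jk : Fin (n + 1) × Fin (n + 1) =>
      ¬ ∀ h : jk.1 ≠ 0,
        jk.2 ≠ (q (jk.1.pred h)).castSucc ∧ jk.2 ≠ (q (jk.1.pred h)).succ)).card = 2 * n := by
    have himg : (Finset.univ.filter (fun jk : Fin (n + 1) × Fin (n + 1) =>
        ¬ ∀ h : jk.1 ≠ 0,
          jk.2 ≠ (q (jk.1.pred h)).castSucc ∧ jk.2 ≠ (q (jk.1.pred h)).succ))
        = Finset.univ.image (fun mb : Fin n × Bool =>
            (mb.1.succ, if mb.2 then (q mb.1).castSucc else (q mb.1).succ)) := by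
      ext ⟨j, k⟩
      simp only [Finset.mem_filter, Finset.mem_image, Finset.mem_univ, true_and]
      constructor
      · intro hne
        by_cases h0 : j = 0
        · exact absurd (fun h => absurd h0 h) hne
        · set m := j.pred h0 with hm
          have hms : m.succ = j := Fin.succ_pred _ _
          by_cases hk1 : k = (q m).castSucc
          · exact ⟨(m, true), by simp [hms, hk1]⟩
          · by_cases hk2 : k = (q m).succ
            · exact ⟨(m, false), by simp [hms, hk2]⟩
            · exact absurd (fun h => ⟨hk1, hk2⟩) hne
      · rintro ⟨⟨m, b⟩, hmb⟩
        rw [Prod.ext_iff] at hmb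
        obtain ⟨hj, hk⟩ := hmb
        simp only at hj hk
        subst hj
        intro hcan
        have hcan' := hcan (Fin.succ_ne_zero m)
        rw [Fin.pred_succ] at hcan'
        cases b with
        | true => simp only [if_true] at hk; exact hcan'.1 hk.symm
        | false => simp only [if_neg Bool.false_ne_true] at hk; exact hcan'.2 hk.symm
    have hψinj : Function.Injective (fun mb : Fin n × Bool =>
        ((mb.1.succ : Fin (n + 1)), if mb.2 then (q mb.1).castSucc else (q mb.1).succ)) := by
      rintro ⟨m, b⟩ ⟨m', b'⟩ h
      rw [Prod.ext_iff] at h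
      obtain ⟨h1, h2⟩ := h
      simp only at h1 h2
      have hm : m = m' := Fin.succ_injective _ h1
      subst hm
      cases b <;> cases b' <;> simp_all
      · have := congrArg Fin.val h2
        simp [Fin.val_succ] at this
      · have := congrArg Fin.val h2
        simp [Fin.val_succ] at this
    rw [himg, Finset.card_image_of_injective _ hψinj]
    simp [Fintype.card_prod]
    ring
  rw [← hT] at hsplit
  rw [hB, huniv] at hsplit
  have harith : (n + 1) * (n + 1) = n ^ 2 + 2 * n + 1 := by ring
  omega
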